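/- arXiv:1810.02954 — 3 statements merged into one kernel-verified Lean document; each statement's English description precedes it below -/
import Mathlib

section
/- Lower bound for the expected Euclidean norm via a truncated quadratic loss: Let Z = (Z₁,…,Z_n) ∈ ℝⁿ be a random vector with independent coordinates. Then for every constant K > 0, every deterministic vector a = (a₁,…,a_n) ∈ ℝⁿ, and every t > 0, E‖Z − a‖₂ ≥ (1 − K²·n^{-1}·t^{-2})₊ · (E[L²(Z,a;K)] − n·t)₊^{1/2}, where L(Z,a;K) := ( Σ_{i=1}^n [ (Z_i − a_i)² ∧ K ] )^{1/2} and x₊ := max(x,0). -/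
open MeasureTheory Filter ProbabilityTheory

noncomputable section

/-- **Lower bound for the expected Euclidean norm via a truncated quadratic loss.**
If `Z = (Z₁, …, Z_n)` has independent coordinates then, for every `K > 0`,
every deterministic `a ∈ ℝⁿ` and every `t > 0`,
`E‖Z - a‖₂ ≥ (1 - K² n⁻¹ t⁻²)₊ (E L²(Z,a;K) - n t)₊^{1/2}`,
where `L(Z,a;K)² = ∑ᵢ ((Zᵢ - aᵢ)² ∧ K)`. -/
theorem statement12
    (n : ℕ) (Ω : Type) [MeasureSpace Ω] (hprob : IsProbabilityMeasure (volume : Measure Ω))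
    (Z : Fin n → Ω → ℝ) (hmeas : ∀ i, Measurable (Z i))
    (hindep : iIndepFun Z volume)
    (K : ℝ) (hK : 0 < K) (a : Fin n → ℝ) (t : ℝ) (ht : 0 < t) :
    ENNReal.ofReal (max 0 (1 - K ^ 2 * (n : ℝ)⁻¹ * (t ^ 2)⁻¹) *
        Real.sqrt (max 0 ((∫ ω, ∑ i, min ((Z i ω - a i) ^ 2) K) - n * t)))
      ≤ ∫⁻ ω, ENNReal.ofReal (Real.sqrt (∑ i, (Z i ω - a i) ^ 2)) := by
  classical
  haveI := hprob
  set X : Fin n → Ω → ℝ := fun i ω => min ((Z i ω - a i) ^ 2) K with hXdef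
  set S : Ω → ℝ := ∑ i, X i with hSdef
  have hSapp : ∀ ω, S ω = ∑ i, min ((Z i ω - a i) ^ 2) K := by
    intro ω; simp [hSdef, hXdef, Finset.sum_apply]
  set ES : ℝ := ∫ ω, ∑ i, min ((Z i ω - a i) ^ 2) K with hESdef
  set craw : ℝ := 1 - K ^ 2 * (n : ℝ)⁻¹ * (t ^ 2)⁻¹ with hcraw
  set m : ℝ := ES - n * t with hm
  -- trivial case
  rcases le_or_gt (max 0 craw * Real.sqrt (max 0 m)) 0 with h0 | h0
  · rw [ENNReal.ofReal_eq_zero.mpr h0]; exact zero_le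
  have hcpos : 0 < craw := by
    rcases lt_or_ge 0 craw with h | h
    · exact h
    · exfalso; rw [max_eq_left h, zero_mul] at h0; exact lt_irrefl 0 h0
  have hmpos : 0 < m := by
    by_contra hmn
    push_neg at hmn
    rw [max_eq_left hmn, Real.sqrt_zero, mul_zero] at h0
    exact lt_irrefl 0 h0
  have hnpos : 0 < n := by
    rcases Nat.eq_zero_or_pos n with h | h
    · exfalso
      have : ES = 0 := by
        rw [hESdef]; subst h; simp
      rw [hm, this, h] at hmpos; simp at hmpos
    · exact h
  have hnR : (0 : ℝ) < n := Nat.cast_pos.mpr hnpos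
  -- basic facts about X
  have hXm : ∀ i, Measurable (X i) := fun i =>
    (((hmeas i).sub_const (a i)).pow_const 2).min measurable_const
  have hX0 : ∀ i ω, 0 ≤ X i ω := fun i ω => le_min (sq_nonneg _) hK.le
  have hXK : ∀ i ω, X i ω ≤ K := fun i ω => min_le_right _ _
  have hXL2 : ∀ i, MemLp (X i) 2 volume := fun i =>
    MemLp.of_bound (hXm i).aestronglyMeasurable K
      (ae_of_all _ fun ω => by
        rw [Real.norm_eq_abs, abs_of_nonneg (hX0 i ω)]; exact hXK i ω)
  have hSL2 : MemLp S 2 volume := memLp_finset_sum' _ fun i _ => hXL2 i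
  have hSmeas : Measurable S := by
    have : Measurable fun ω => ∑ i, X i ω := Finset.measurable_sum _ fun i _ => hXm i
    rw [hSdef, Finset.sum_fn]; exact this
  -- independence of the X i
  have hindepX : iIndepFun X volume := by
    have := hindep.comp (fun i x => min ((x - a i) ^ 2) K)
      (fun i => ((measurable_id.sub_const (a i)).pow_const 2).min measurable_const)
    exact this
  -- variance bound
  have hVarXi : ∀ i, variance (X i) volume ≤ K ^ 2 := by
    intro i
    refine (variance_le_expectation_sq (hXm i).aestronglyMeasurable).trans ?_
    have : ∫ ω, (X i ^ 2) ω ≤ ∫ _ω : Ω, K ^ 2 := by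
      refine integral_mono ((hXL2 i).integrable_sq) (integrable_const _) ?_
      intro ω
      simp only [Pi.pow_apply]
      exact pow_le_pow_left₀ (hX0 i ω) (hXK i ω) 2
    simpa [measure_univ] using this
  have hVarS : variance S volume ≤ n * K ^ 2 := by
    rw [hSdef, IndepFun.variance_sum (fun i _ => hXL2 i)
      (fun i _ j _ hij => hindepX.indepFun hij)]
    calc ∑ i, variance (X i) volume ≤ ∑ _i : Fin n, K ^ 2 :=
          Finset.sum_le_sum fun i _ => hVarXi i
      _ = n * K ^ 2 := by simp [mul_comm]
  -- ES = expectation of S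
  have hES_eq : ES = ∫ ω, S ω := by
    rw [hESdef]; exact integral_congr_ae (ae_of_all _ fun ω => (hSapp ω).symm)
  -- Chebyshev
  set A : Set Ω := {ω | m ≤ S ω} with hA
  have hAmeas : MeasurableSet A := measurableSet_le measurable_const hSmeas
  have hnt : (0:ℝ) < (n:ℝ) * t := mul_pos hnR ht
  have hcheb : volume Aᶜ ≤ ENNReal.ofReal (K ^ 2 * (n : ℝ)⁻¹ * (t ^ 2)⁻¹) := by
    have h1 : volume Aᶜ ≤ volume {ω | (n : ℝ) * t ≤ |S ω - ∫ x, S x|} := by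
      apply measure_mono
      intro ω hω
      simp only [Set.mem_compl_iff, hA, Set.mem_setOf_eq, not_le] at hω
      simp only [Set.mem_setOf_eq]
      rw [hm, hES_eq] at hω
      rw [abs_sub_comm]
      exact le_abs.mpr (Or.inl (by linarith))
    have h2 := meas_ge_le_variance_div_sq (μ := volume) hSL2 hnt
    have h3 : variance S volume / ((n : ℝ) * t) ^ 2 ≤ K ^ 2 * (n : ℝ)⁻¹ * (t ^ 2)⁻¹ := by
      rw [div_le_iff₀ (by positivity)]
      have heq : K ^ 2 * (n : ℝ)⁻¹ * (t ^ 2)⁻¹ * ((n : ℝ) * t) ^ 2 = n * K ^ 2 := by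
        field_simp
      rw [heq]
      exact hVarS
    exact h1.trans (h2.trans (ENNReal.ofReal_le_ofReal h3))
  have hmuA : ENNReal.ofReal craw ≤ volume A := by
    have h4 : volume A = 1 - volume Aᶜ := by
      have h5 := prob_compl_eq_one_sub (μ := volume) hAmeas.compl
      rwa [compl_compl] at h5
    calc ENNReal.ofReal craw = 1 - ENNReal.ofReal (K ^ 2 * (n : ℝ)⁻¹ * (t ^ 2)⁻¹) := by
          rw [hcraw, ENNReal.ofReal_sub _ (by positivity), ENNReal.ofReal_one]
      _ ≤ 1 - volume Aᶜ := tsub_le_tsub_left hcheb 1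
      _ = volume A := h4.symm
  have hsum_le : ∀ ω, S ω ≤ ∑ i, (Z i ω - a i) ^ 2 := fun ω => by
    rw [hSapp]
    exact Finset.sum_le_sum fun i _ => min_le_left _ _
  calc ENNReal.ofReal (max 0 craw * Real.sqrt (max 0 m))
      = ENNReal.ofReal craw * ENNReal.ofReal (Real.sqrt m) := by
        rw [max_eq_right hcpos.le, max_eq_right hmpos.le, ENNReal.ofReal_mul hcpos.le]
    _ ≤ volume A * ENNReal.ofReal (Real.sqrt m) := mul_le_mul_left hmuA _
    _ = ∫⁻ _ω in A, ENNReal.ofReal (Real.sqrt m) := by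
        rw [setLIntegral_const, mul_comm]
    _ ≤ ∫⁻ ω in A, ENNReal.ofReal (Real.sqrt (S ω)) := by
        refine setLIntegral_mono (Measurable.ennreal_ofReal (hSmeas.sqrt)) ?_
        intro ω hω
        exact ENNReal.ofReal_le_ofReal (Real.sqrt_le_sqrt hω)
    _ ≤ ∫⁻ ω, ENNReal.ofReal (Real.sqrt (S ω)) := setLIntegral_le_lintegral _ _
    _ ≤ ∫⁻ ω, ENNReal.ofReal (Real.sqrt (∑ i, (Z i ω - a i) ^ 2)) :=
        lintegral_mono fun ω => ENNReal.ofReal_le_ofReal (Real.sqrt_le_sqrt (hsum_le ω))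


end
end

section
/- Hölder continuity of the inverse-shrinkage function: Fix γ > 0 and let H(σ) := √((σ + γ^{-1/2}σ^{-1})(σ + γ^{1/2}σ^{-1})) for σ ≥ 1, which is strictly increasing on (1,∞) with inverse H^{-1} defined on (H(1),∞), H(1) = γ^{1/4} + γ^{-1/4}. Then: (i) for all x₁, x₂ ≥ H(1), |H^{-1}(x₁) − H^{-1}(x₂)| ≤ 2·|x₁ − x₂|^{1/4}·|x₁ + x₂|^{3/4}; consequently (ii) for every a > 0 and ζ > 0, the function f_a defined by f_a(σ) = a^{-1/2}·H^{-1}(a^{-1/2}σ) for σ ≥ τ_a := a^{1/2}H(1) and f_a(σ) = 0 otherwise is (4a^{-1}ζ^{3/4}, 1/4)-Hölder continuous on [τ_a, ζ]: |f_a(x₁) − f_a(x₂)| ≤ 4a^{-1}ζ^{3/4}|x₁ − x₂|^{1/4} for x₁, x₂ ∈ [τ_a, ζ]. -/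
open Set

noncomputable section

/-- The function `H` describing the asymptotic singular value map:
`H(σ) = √((σ + γ^{-1/2} σ⁻¹)(σ + γ^{1/2} σ⁻¹))` for `σ ≥ 1`,
and `H(σ) = γ^{1/4} + γ^{-1/4}` otherwise. -/
def Hfun (γ σ : ℝ) : ℝ :=
  if 1 ≤ σ then Real.sqrt ((σ + (Real.sqrt γ)⁻¹ * σ⁻¹) * (σ + Real.sqrt γ * σ⁻¹))
  else γ ^ ((1 : ℝ) / 4) + γ ^ (-(1 : ℝ) / 4)

/-- Explicit inverse of `H` on `(H(1), ∞)`: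
`H⁻¹(x) = (1/√2) (x² - h + ((x² - h)² - 4)^{1/2})^{1/2}` with `h = γ^{1/2} + γ^{-1/2}`. -/
def Hinv (γ x : ℝ) : ℝ :=
  Real.sqrt ((x ^ 2 - (Real.sqrt γ + (Real.sqrt γ)⁻¹)
      + Real.sqrt ((x ^ 2 - (Real.sqrt γ + (Real.sqrt γ)⁻¹)) ^ 2 - 4)) / 2)

/-- The inverse-shrinkage function `f_a(σ) = a^{-1/2} H⁻¹(a^{-1/2} σ)` for
`σ ≥ τ_a := a^{1/2} H(1)`, and `f_a(σ) = 0` otherwise. -/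
def famFun (γ a σ : ℝ) : ℝ :=
  if Real.sqrt a * Hfun γ 1 ≤ σ then (Real.sqrt a)⁻¹ * Hinv γ ((Real.sqrt a)⁻¹ * σ)
  else 0

lemma abs_sqrt_sub_sqrt_le {a b : ℝ} (ha : 0 ≤ a) (hb : 0 ≤ b) :
    |Real.sqrt a - Real.sqrt b| ≤ Real.sqrt |a - b| := by
  wlog hab : b ≤ a generalizing a b
  · rw [abs_sub_comm, abs_sub_comm a b]; exact this hb ha (le_of_not_ge hab)
  rw [abs_of_nonneg (sub_nonneg.2 (Real.sqrt_le_sqrt hab)),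
      abs_of_nonneg (sub_nonneg.2 hab), sub_le_iff_le_add]
  refine Real.sqrt_le_iff.2 ⟨by positivity, ?_⟩
  have h1 := Real.sq_sqrt (sub_nonneg.2 hab)
  have h2 := Real.sq_sqrt hb
  nlinarith [mul_nonneg (Real.sqrt_nonneg (a - b)) (Real.sqrt_nonneg b)]

lemma Hfun_one (γ : ℝ) (hγ : 0 < γ) :
    Hfun γ 1 = Real.sqrt (2 + (Real.sqrt γ + (Real.sqrt γ)⁻¹)) := by
  have hs : (0 : ℝ) < Real.sqrt γ := Real.sqrt_pos.2 hγ
  rw [Hfun, if_pos le_rfl]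
  congr 1
  field_simp
  ring

lemma two_le_h (γ : ℝ) (hγ : 0 < γ) : 2 ≤ Real.sqrt γ + (Real.sqrt γ)⁻¹ := by
  have hs : (0 : ℝ) < Real.sqrt γ := Real.sqrt_pos.2 hγ
  have h1 : Real.sqrt γ * (Real.sqrt γ)⁻¹ = 1 := mul_inv_cancel₀ (ne_of_gt hs)
  have h2 : (0 : ℝ) < (Real.sqrt γ)⁻¹ := inv_pos.2 hs
  nlinarith [sq_nonneg (Real.sqrt γ - 1)]

lemma two_le_Hfun_one (γ : ℝ) (hγ : 0 < γ) : (2 : ℝ) ≤ Hfun γ 1 := by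
  have hh2 := two_le_h γ hγ
  rw [Hfun_one γ hγ]
  exact (Real.le_sqrt (by norm_num) (by linarith)).2 (by nlinarith)

set_option maxHeartbeats 1000000 in
/-- Core Hölder bound with constant 1. -/
lemma key_holder (γ : ℝ) (hγ : 0 < γ) (x₁ x₂ : ℝ)
    (h₁ : Hfun γ 1 ≤ x₁) (h₂ : Hfun γ 1 ≤ x₂) :
    |Hinv γ x₁ - Hinv γ x₂| ≤
      |x₁ - x₂| ^ ((1 : ℝ) / 4) * (x₁ + x₂) ^ ((3 : ℝ) / 4) := by
  set h : ℝ := Real.sqrt γ + (Real.sqrt γ)⁻¹ with hh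
  have hh2 : 2 ≤ h := two_le_h γ hγ
  have hH1 : Hfun γ 1 = Real.sqrt (2 + h) := Hfun_one γ hγ
  have h2h : (0 : ℝ) ≤ 2 + h := by linarith
  have hH1two : (2 : ℝ) ≤ Hfun γ 1 := two_le_Hfun_one γ hγ
  have hx₁ : (2 : ℝ) ≤ x₁ := le_trans hH1two h₁
  have hx₂ : (2 : ℝ) ≤ x₂ := le_trans hH1two h₂
  have hsq : ∀ x : ℝ, Hfun γ 1 ≤ x → 2 + h ≤ x ^ 2 := by
    intro x hx
    have h0 : Real.sqrt (2 + h) ≤ x := hH1 ▸ hx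
    have := pow_le_pow_left₀ (Real.sqrt_nonneg (2 + h)) h0 2
    rwa [Real.sq_sqrt h2h] at this
  have hu₁ : (2 : ℝ) ≤ x₁ ^ 2 - h := by have := hsq x₁ h₁; linarith
  have hu₂ : (2 : ℝ) ≤ x₂ ^ 2 - h := by have := hsq x₂ h₂; linarith
  set u₁ : ℝ := x₁ ^ 2 - h with hu₁def
  set u₂ : ℝ := x₂ ^ 2 - h with hu₂def
  set v₁ : ℝ := Real.sqrt (u₁ ^ 2 - 4) with hv₁def
  set v₂ : ℝ := Real.sqrt (u₂ ^ 2 - 4) with hv₂def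
  set d : ℝ := |x₁ - x₂| with hd
  set s : ℝ := x₁ + x₂ with hs
  have hd0 : 0 ≤ d := abs_nonneg _
  have hs0 : (0 : ℝ) < s := by simp only [hs]; linarith
  have hds : d ≤ s := by
    rw [hd, hs, abs_sub_le_iff]; constructor <;> linarith
  have hg₁ : Hinv γ x₁ = Real.sqrt ((u₁ + v₁) / 2) := by
    rw [Hinv, hv₁def, hu₁def, hh]
  have hg₂ : Hinv γ x₂ = Real.sqrt ((u₂ + v₂) / 2) := by
    rw [Hinv, hv₂def, hu₂def, hh]
  have hv₁0 : 0 ≤ v₁ := Real.sqrt_nonneg _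
  have hv₂0 : 0 ≤ v₂ := Real.sqrt_nonneg _
  have hg₁0 : 0 ≤ (u₁ + v₁) / 2 := by linarith
  have hg₂0 : 0 ≤ (u₂ + v₂) / 2 := by linarith
  -- |u₁ - u₂| = d * s
  have habsu : |u₁ - u₂| = d * s := by
    rw [hu₁def, hu₂def, show x₁ ^ 2 - h - (x₂ ^ 2 - h) = (x₁ - x₂) * (x₁ + x₂) by ring,
      abs_mul, abs_of_pos hs0]
  -- |u₁² - u₂²| ≤ d * s * s²
  have husum : u₁ + u₂ ≤ s ^ 2 := by
    rw [hu₁def, hu₂def, hs]; nlinarith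
  have habsU : |u₁ ^ 2 - u₂ ^ 2| ≤ d * s * s ^ 2 := by
    rw [show u₁ ^ 2 - u₂ ^ 2 = (u₁ - u₂) * (u₁ + u₂) by ring, abs_mul, habsu,
      abs_of_pos (show (0:ℝ) < u₁ + u₂ by linarith)]
    exact mul_le_mul_of_nonneg_left husum (by positivity)
  -- |v₁ - v₂| ≤ √d * √s * s
  have hsqrt_dss : Real.sqrt (d * s * s ^ 2) = Real.sqrt d * Real.sqrt s * s := by
    rw [Real.sqrt_mul (by positivity), Real.sqrt_mul hd0, Real.sqrt_sq hs0.le]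
  have hvdiff : |v₁ - v₂| ≤ Real.sqrt d * Real.sqrt s * s := by
    rw [← hsqrt_dss]
    calc |v₁ - v₂| ≤ Real.sqrt |(u₁ ^ 2 - 4) - (u₂ ^ 2 - 4)| :=
          abs_sqrt_sub_sqrt_le (by nlinarith) (by nlinarith)
      _ ≤ Real.sqrt (d * s * s ^ 2) := Real.sqrt_le_sqrt
          (by rw [show (u₁ ^ 2 - 4) - (u₂ ^ 2 - 4) = u₁ ^ 2 - u₂ ^ 2 by ring]; exact habsU)
  -- d * s ≤ √d * √s * s
  have hds' : d * s ≤ Real.sqrt d * Real.sqrt s * s := by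
    have h1 : Real.sqrt d * Real.sqrt d = d := Real.mul_self_sqrt hd0
    have h2 : Real.sqrt d ≤ Real.sqrt s := Real.sqrt_le_sqrt hds
    nlinarith [Real.sqrt_nonneg d, Real.sqrt_nonneg s,
      mul_nonneg (mul_nonneg (sub_nonneg.2 h2) (Real.sqrt_nonneg d)) hs0.le]
  -- combine
  have hgdiff : |(u₁ + v₁) / 2 - (u₂ + v₂) / 2| ≤ Real.sqrt d * s * Real.sqrt s := by
    have habs : |(u₁ - u₂) + (v₁ - v₂)| ≤ d * s + Real.sqrt d * Real.sqrt s * s := by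
      calc |(u₁ - u₂) + (v₁ - v₂)| ≤ |u₁ - u₂| + |v₁ - v₂| := abs_add_le _ _
        _ ≤ d * s + Real.sqrt d * Real.sqrt s * s := by rw [habsu]; linarith
    rw [show (u₁ + v₁) / 2 - (u₂ + v₂) / 2 = ((u₁ - u₂) + (v₁ - v₂)) / 2 by ring,
      abs_div, abs_two, div_le_iff₀ (by norm_num : (0:ℝ) < 2)]
    nlinarith [habs, hds']
  -- final computation
  have hfinal : Real.sqrt (Real.sqrt d * s * Real.sqrt s)
      = d ^ ((1 : ℝ) / 4) * s ^ ((3 : ℝ) / 4) := by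
    have e1 : Real.sqrt d * s * Real.sqrt s = d ^ ((1 : ℝ) / 2) * s ^ ((3 : ℝ) / 2) := by
      rw [Real.sqrt_eq_rpow, Real.sqrt_eq_rpow,
        show (3 : ℝ) / 2 = 1 + 1 / 2 by norm_num, Real.rpow_add hs0, Real.rpow_one]
      ring
    rw [e1, Real.sqrt_mul (Real.rpow_nonneg hd0 _), Real.sqrt_eq_rpow, Real.sqrt_eq_rpow,
      ← Real.rpow_mul hd0, ← Real.rpow_mul hs0.le]
    norm_num
  calc |Hinv γ x₁ - Hinv γ x₂|
      ≤ Real.sqrt |(u₁ + v₁) / 2 - (u₂ + v₂) / 2| := by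
        rw [hg₁, hg₂]; exact abs_sqrt_sub_sqrt_le hg₁0 hg₂0
    _ ≤ Real.sqrt (Real.sqrt d * s * Real.sqrt s) := Real.sqrt_le_sqrt hgdiff
    _ = d ^ ((1 : ℝ) / 4) * s ^ ((3 : ℝ) / 4) := hfinal

set_option maxHeartbeats 1000000 in
/-- **Hölder continuity of the inverse-shrinkage function.** -/
theorem statement15 (γ : ℝ) (hγ : 0 < γ) :
    -- (i) Hölder bound for `H⁻¹` on `[H(1), ∞)`
    (∀ x₁ x₂ : ℝ, Hfun γ 1 ≤ x₁ → Hfun γ 1 ≤ x₂ →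
      |Hinv γ x₁ - Hinv γ x₂| ≤
        2 * |x₁ - x₂| ^ ((1 : ℝ) / 4) * |x₁ + x₂| ^ ((3 : ℝ) / 4)) ∧
    -- (ii) `(4 a⁻¹ ζ^{3/4}, 1/4)`-Hölder continuity of `f_a` on `[τ_a, ζ]`
    (∀ a ζ : ℝ, 0 < a → 0 < ζ →
      ∀ x₁ ∈ Set.Icc (Real.sqrt a * Hfun γ 1) ζ,
        ∀ x₂ ∈ Set.Icc (Real.sqrt a * Hfun γ 1) ζ,
          |famFun γ a x₁ - famFun γ a x₂| ≤
            4 * a⁻¹ * ζ ^ ((3 : ℝ) / 4) * |x₁ - x₂| ^ ((1 : ℝ) / 4)) := by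
  have hH1two : (2 : ℝ) ≤ Hfun γ 1 := two_le_Hfun_one γ hγ
  constructor
  · intro x₁ x₂ h₁ h₂
    have hk := key_holder γ hγ x₁ x₂ h₁ h₂
    have hs0 : (0 : ℝ) < x₁ + x₂ := by
      have := le_trans hH1two h₁; have := le_trans hH1two h₂; linarith
    rw [abs_of_pos hs0]
    have hA : 0 ≤ |x₁ - x₂| ^ ((1 : ℝ) / 4) := Real.rpow_nonneg (abs_nonneg _) _
    have hB : 0 ≤ (x₁ + x₂) ^ ((3 : ℝ) / 4) := Real.rpow_nonneg hs0.le _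
    nlinarith [mul_nonneg hA hB]
  · intro a ζ ha hζ x₁ hx₁ x₂ hx₂
    obtain ⟨hx₁l, hx₁r⟩ := hx₁
    obtain ⟨hx₂l, hx₂r⟩ := hx₂
    set b : ℝ := (Real.sqrt a)⁻¹ with hbdef
    have hsa : 0 < Real.sqrt a := Real.sqrt_pos.2 ha
    have hb : 0 < b := inv_pos.2 hsa
    have hba : b * Real.sqrt a = 1 := inv_mul_cancel₀ (ne_of_gt hsa)
    have hx₁pos : 0 < x₁ := lt_of_lt_of_le (by positivity) hx₁l
    have hx₂pos : 0 < x₂ := lt_of_lt_of_le (by positivity) hx₂l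
    have hH₁ : Hfun γ 1 ≤ b * x₁ := by
      calc Hfun γ 1 = b * (Real.sqrt a * Hfun γ 1) := by rw [← mul_assoc, hba, one_mul]
        _ ≤ b * x₁ := mul_le_mul_of_nonneg_left hx₁l hb.le
    have hH₂ : Hfun γ 1 ≤ b * x₂ := by
      calc Hfun γ 1 = b * (Real.sqrt a * Hfun γ 1) := by rw [← mul_assoc, hba, one_mul]
        _ ≤ b * x₂ := mul_le_mul_of_nonneg_left hx₂l hb.le
    have hk := key_holder γ hγ (b * x₁) (b * x₂) hH₁ hH₂
    have hs0 : (0 : ℝ) < x₁ + x₂ := by linarith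
    have hbd1 : |b * x₁ - b * x₂| = b * |x₁ - x₂| := by
      rw [← mul_sub, abs_mul, abs_of_pos hb]
    have hbd2 : b * x₁ + b * x₂ = b * (x₁ + x₂) := by ring
    rw [hbd1, hbd2, Real.mul_rpow hb.le (abs_nonneg _), Real.mul_rpow hb.le hs0.le] at hk
    have hbb : b ^ ((1 : ℝ) / 4) * b ^ ((3 : ℝ) / 4) = b := by
      rw [← Real.rpow_add hb]; norm_num
    have hb2 : b * b = a⁻¹ := by
      rw [hbdef, ← mul_inv, Real.mul_self_sqrt ha.le]
    have hS : (x₁ + x₂) ^ ((3 : ℝ) / 4) ≤ 2 * ζ ^ ((3 : ℝ) / 4) := by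
      calc (x₁ + x₂) ^ ((3 : ℝ) / 4) ≤ (2 * ζ) ^ ((3 : ℝ) / 4) :=
            Real.rpow_le_rpow hs0.le (by linarith) (by norm_num)
        _ = 2 ^ ((3 : ℝ) / 4) * ζ ^ ((3 : ℝ) / 4) := Real.mul_rpow (by norm_num) hζ.le
        _ ≤ 2 * ζ ^ ((3 : ℝ) / 4) := by
            have h24 : (2 : ℝ) ^ ((3 : ℝ) / 4) ≤ 2 ^ (1 : ℝ) :=
              Real.rpow_le_rpow_of_exponent_le one_le_two (by norm_num)
            rw [Real.rpow_one] at h24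
            exact mul_le_mul_of_nonneg_right h24 (Real.rpow_nonneg hζ.le _)
    rw [famFun, if_pos hx₁l, famFun, if_pos hx₂l, ← mul_sub, abs_mul, abs_of_pos hb]
    set D : ℝ := |x₁ - x₂| ^ ((1 : ℝ) / 4) with hD
    set S : ℝ := (x₁ + x₂) ^ ((3 : ℝ) / 4) with hSdef
    set Z : ℝ := ζ ^ ((3 : ℝ) / 4) with hZ
    have hD0 : 0 ≤ D := Real.rpow_nonneg (abs_nonneg _) _
    have hZ0 : 0 ≤ Z := Real.rpow_nonneg hζ.le _
    calc b * |Hinv γ (b * x₁) - Hinv γ (b * x₂)|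
        ≤ b * (b ^ ((1 : ℝ) / 4) * D * (b ^ ((3 : ℝ) / 4) * S)) :=
          mul_le_mul_of_nonneg_left hk hb.le
      _ = a⁻¹ * (D * S) := by
          rw [show b * (b ^ ((1 : ℝ) / 4) * D * (b ^ ((3 : ℝ) / 4) * S))
              = b * (b ^ ((1 : ℝ) / 4) * b ^ ((3 : ℝ) / 4)) * (D * S) by ring, hbb, hb2]
      _ ≤ 4 * a⁻¹ * Z * D := by
          have h1 : D * S ≤ D * (2 * Z) := mul_le_mul_of_nonneg_left hS hD0
          have ha' : (0 : ℝ) < a⁻¹ := inv_pos.2 ha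
          nlinarith [mul_nonneg hD0 hZ0]

end
end

section
/- Pointwise concentration of a kernel density estimator: Let X₁,…,X_n be independent continuous real random variables with densities p_{X₁},…,p_{X_n}, and let K: ℝ → ℝ be square integrable. Set p_∞ := max_i ‖p_{X_i}‖_∞, M_∞ := ‖K‖_∞, σ² := ∫_ℝ K²(z) dz, and for h > 0 define Z_n(x) := (nh)^{-1} Σ_{i=1}^n K((x − X_i)/h). Assume nh ≥ 1. Then there exists a numerical constant c > 0 such that for all x ∈ ℝ and all t > 0, P( |Z_n(x) − E Z_n(x)| ≥ (nh)^{-1/2}·t ) ≤ 2·exp( − c·t² / (σ²·p_∞ + M_∞·t) ). -/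
open MeasureTheory Filter ProbabilityTheory
open scoped ENNReal NNReal

noncomputable section

lemma my_exp_le {u : ℝ} (hu : |u| ≤ 1) : Real.exp u ≤ 1 + u + u ^ 2 := by
  have h := Real.exp_bound hu (n := 2) (by norm_num)
  have h2 : Real.exp u - (1 + u) ≤ |u| ^ 2 * ((2:ℕ).succ / ((2:ℕ).factorial * 2)) := by
    have h3 := (abs_sub_le_iff.1 h).1
    have : (∑ m ∈ Finset.range 2, u ^ m / m.factorial) = 1 + u := by
      simp [Finset.sum_range_succ]
    linarith [this ▸ h3]
  have h4 : |u| ^ 2 = u ^ 2 := sq_abs u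
  have h5 : ((2:ℕ).succ : ℝ) / ((2:ℕ).factorial * 2) = 3/4 := by norm_num [Nat.factorial]
  nlinarith [sq_nonneg u]

lemma my_mgf_le {Ω : Type} [MeasureSpace Ω] [IsProbabilityMeasure (volume : Measure Ω)]
    {W : Ω → ℝ} (hWm : Measurable W) {b v l : ℝ} (hv : 0 ≤ v)
    (hWb : ∀ ω, |W ω| ≤ b) (hmean : ∫ ω, W ω = 0) (hvar : ∫ ω, (W ω) ^ 2 ≤ v)
    (hl : 0 ≤ l) (hlb : l * b ≤ 1) :
    mgf W volume l ≤ Real.exp (l ^ 2 * v) := by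
  have hintW : Integrable W (volume : Measure Ω) :=
    (integrable_const b).mono' hWm.aestronglyMeasurable
      (ae_of_all _ fun ω => by simpa using hWb ω)
  have hintW2 : Integrable (fun ω => (W ω) ^ 2) (volume : Measure Ω) :=
    (integrable_const (b ^ 2)).mono' (hWm.pow_const 2).aestronglyMeasurable
      (ae_of_all _ fun ω => by
        have := hWb ω
        have h0 := abs_nonneg (W ω)
        simp only [norm_pow, Real.norm_eq_abs]
        calc |W ω| ^ 2 ≤ b ^ 2 := by nlinarith
        )
  have hub : ∀ ω, |l * W ω| ≤ 1 := fun ω => by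
    rw [abs_mul, abs_of_nonneg hl]
    calc l * |W ω| ≤ l * b := by
          rcases eq_or_lt_of_le hl with h' | h'
          · simp [← h']
          · exact mul_le_mul_of_nonneg_left (hWb ω) hl
      _ ≤ 1 := hlb
  have key : ∀ ω, Real.exp (l * W ω) ≤ 1 + l * W ω + (l * W ω) ^ 2 :=
    fun ω => my_exp_le (hub ω)
  have hint_exp : Integrable (fun ω => Real.exp (l * W ω)) (volume : Measure Ω) :=
    (integrable_const (Real.exp 1)).mono' ((hWm.const_mul l).exp).aestronglyMeasurable
      (ae_of_all _ fun ω => by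
        rw [Real.norm_eq_abs, abs_of_pos (Real.exp_pos _)]
        exact Real.exp_le_exp.2 (le_trans (le_abs_self _) (hub ω)))
  have hint_rhs : Integrable (fun ω => 1 + l * W ω + (l * W ω) ^ 2) (volume : Measure Ω) := by
    refine Integrable.add (Integrable.add (integrable_const 1) (hintW.const_mul l)) ?_
    have : (fun ω => (l * W ω) ^ 2) = fun ω => l ^ 2 * (W ω) ^ 2 := by
      funext ω; ring
    rw [this]; exact hintW2.const_mul _
  have step1 : mgf W volume l ≤ ∫ ω, (1 + l * W ω + (l * W ω) ^ 2) := by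
    refine le_trans (le_of_eq rfl) (integral_mono hint_exp hint_rhs key)
  have step2 : ∫ ω, (1 + l * W ω + (l * W ω) ^ 2) = 1 + l ^ 2 * (∫ ω, (W ω) ^ 2) := by
    have e1 : (fun ω => 1 + l * W ω + (l * W ω) ^ 2)
        = fun ω => (1 : ℝ) + l * W ω + l ^ 2 * (W ω) ^ 2 := by funext ω; ring
    rw [e1]
    have h1 : Integrable (fun ω => (1 : ℝ) + l * W ω) (volume : Measure Ω) :=
      (integrable_const 1).add (hintW.const_mul l)
    have e2 : ∫ ω, ((1 : ℝ) + l * W ω + l ^ 2 * (W ω) ^ 2)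
        = (∫ ω, ((1 : ℝ) + l * W ω)) + ∫ ω, l ^ 2 * (W ω) ^ 2 :=
      integral_add h1 (hintW2.const_mul _)
    have e3 : ∫ ω, ((1 : ℝ) + l * W ω) = (∫ ω, (1 : ℝ)) + ∫ ω, l * W ω :=
      integral_add (integrable_const 1) (hintW.const_mul l)
    rw [e2, e3, integral_const_mul, integral_const_mul, hmean, integral_const]
    simp
  have step3 : 1 + l ^ 2 * (∫ ω, (W ω) ^ 2) ≤ Real.exp (l ^ 2 * v) := by
    have : l ^ 2 * (∫ ω, (W ω) ^ 2) ≤ l ^ 2 * v :=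
      mul_le_mul_of_nonneg_left hvar (sq_nonneg l)
    calc 1 + l ^ 2 * (∫ ω, (W ω) ^ 2) ≤ 1 + l ^ 2 * v := by linarith
      _ ≤ Real.exp (l ^ 2 * v) := by linarith [Real.add_one_le_exp (l ^ 2 * v)]
  calc mgf W volume l ≤ _ := step1
    _ = _ := step2
    _ ≤ _ := step3

lemma my_second_moment {Ω : Type} [MeasureSpace Ω] [IsProbabilityMeasure (volume : Measure Ω)]
    {Xi : Ω → ℝ} (hXm : Measurable Xi) {pi : ℝ → ℝ} (hpm : Measurable pi) (hpnn : ∀ y, 0 ≤ pi y)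
    (hlaw : Measure.map Xi volume
      = (volume : Measure ℝ).withDensity fun y => ENNReal.ofReal (pi y))
    {K : ℝ → ℝ} (hKm : Measurable K) (hK2 : MemLp K 2 (volume : Measure ℝ))
    {pinf : ℝ} (hppinf : ∀ y, pi y ≤ pinf)
    {h : ℝ} (hh : 0 < h) (x : ℝ) :
    ∫ ω, (K ((x - Xi ω) / h)) ^ 2 ≤ pinf * (h * ∫ z, K z ^ 2) := by
  set g : ℝ → ℝ := fun y => K ((x - y) / h) ^ 2 with hg_def
  have hgm : Measurable g := ((hKm.comp ((measurable_const.sub measurable_id).div_const h)).pow_const 2)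
  have hgnn : ∀ y, 0 ≤ g y := fun y => sq_nonneg _
  -- integrability of g
  have i1 : Integrable (fun z => K z ^ 2) (volume : Measure ℝ) := hK2.integrable_sq
  have i2 : Integrable (fun u => K (u / h) ^ 2) (volume : Measure ℝ) :=
    (integrable_comp_div_iff (fun z => K z ^ 2) (ne_of_gt hh)).2 i1
  have i3 : Integrable g (volume : Measure ℝ) :=
    (integrable_comp_sub_left (fun u => K (u / h) ^ 2) x).2 i2
  -- value of ∫ g
  have vg : ∫ y, g y = h * ∫ z, K z ^ 2 := by
    have e1 : ∫ y, g y = ∫ u, K (u / h) ^ 2 :=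
      integral_sub_left_eq_self (fun u => K (u / h) ^ 2) volume x
    have e2 : ∫ u, K (u / h) ^ 2 = |h| • ∫ z, K z ^ 2 :=
      MeasureTheory.Measure.integral_comp_div (fun z => K z ^ 2) h
    rw [e1, e2, smul_eq_mul, abs_of_pos hh]
  -- express the expectation as an integral against the density
  have hmap : ∫ ω, (K ((x - Xi ω) / h)) ^ 2 = ∫ y, g y ∂(Measure.map Xi volume) := by
    rw [integral_map hXm.aemeasurable hgm.aestronglyMeasurable]
  have hwd : ∫ y, g y ∂(Measure.map Xi volume) = ∫ y, pi y * g y := by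
    rw [hlaw]
    have : (fun y => ENNReal.ofReal (pi y)) = fun y => (((fun y => (pi y).toNNReal) y : NNReal) : ENNReal) := rfl
    rw [this, integral_withDensity_eq_integral_smul (hpm.real_toNNReal)]
    congr 1
    funext y
    rw [NNReal.smul_def, smul_eq_mul, Real.coe_toNNReal _ (hpnn y)]
  -- comparison
  have ipg : Integrable (fun y => pi y * g y) (volume : Measure ℝ) := by
    refine (i3.const_mul pinf).mono' ((hpm.mul hgm).aestronglyMeasurable) (ae_of_all _ fun y => ?_)
    rw [Real.norm_eq_abs, abs_of_nonneg (mul_nonneg (hpnn y) (hgnn y))]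
    exact mul_le_mul_of_nonneg_right (hppinf y) (hgnn y)
  have hle : ∫ y, pi y * g y ≤ ∫ y, pinf * g y := by
    refine integral_mono ipg (i3.const_mul pinf) fun y => ?_
    exact mul_le_mul_of_nonneg_right (hppinf y) (hgnn y)
  rw [hmap, hwd]
  calc ∫ y, pi y * g y ≤ ∫ y, pinf * g y := hle
    _ = pinf * ∫ y, g y := integral_const_mul _ _
    _ = pinf * (h * ∫ z, K z ^ 2) := by rw [vg]

lemma my_arith {σ2 pinf Minf t q sq s b N D l nn v : ℝ}
    (hσ2 : 0 ≤ σ2) (hpinf : 0 ≤ pinf) (hM0 : 0 < Minf) (ht : 0 < t)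
    (hq1 : 1 ≤ q) (hsqq : sq ^ 2 = q) (hsqpos : 0 < sq)
    (hs_def : s = sq * t) (hb_def : b = 2 * Minf)
    (hNval : N = q * (σ2 * pinf)) (hN : 0 ≤ N) (hvN : nn * v = N)
    (hD_def : D = 2 * N + b * s) (hl_def : l = s / D) :
    -l * s + nn * (l ^ 2 * v) ≤ -(1/8 * t ^ 2) / (σ2 * pinf + Minf * t) := by
  have hq0 : 0 < q := lt_of_lt_of_le one_pos hq1
  have hsqle : sq ≤ q := by nlinarith [sq_nonneg (sq - 1)]
  have hs : 0 < s := by rw [hs_def]; exact mul_pos hsqpos ht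
  have hb : 0 < b := by rw [hb_def]; linarith
  have hbs : 0 < b * s := mul_pos hb hs
  have hNB : 0 < N + b * s := by linarith
  have hD : 0 < D := by rw [hD_def]; linarith
  have hG : 0 < σ2 * pinf + Minf * t := by nlinarith [mul_nonneg hσ2 hpinf]
  have he1 : -l * s + nn * (l ^ 2 * v) = -(s ^ 2 * (N + b * s)) / D ^ 2 := by
    have e : nn * (l ^ 2 * v) = l ^ 2 * N := by rw [← hvN]; ring
    rw [e, hl_def]
    have hD0 : D ≠ 0 := ne_of_gt hD
    field_simp
    rw [hD_def]; ring
  have he2 : -(s ^ 2 * (N + b * s)) / D ^ 2 ≤ -(s ^ 2 / (4 * (N + b * s))) := by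
    have hNB4 : (0:ℝ) < 4 * (N + b * s) := by linarith
    have hD2 : (0:ℝ) < D ^ 2 := pow_pos hD 2
    rw [neg_div, neg_le_neg_iff, div_le_div_iff₀ hNB4 hD2]
    have hDle : D ≤ 2 * (N + b * s) := by rw [hD_def]; linarith
    have hprod : D * D ≤ (2 * (N + b * s)) * (2 * (N + b * s)) :=
      mul_le_mul hDle hDle hD.le (by linarith)
    nlinarith [sq_nonneg s, mul_le_mul_of_nonneg_left hprod (sq_nonneg s)]
  have he3 : (1/8 * t ^ 2) / (σ2 * pinf + Minf * t) ≤ s ^ 2 / (4 * (N + b * s)) := by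
    have hNB4 : (0:ℝ) < 4 * (N + b * s) := by linarith
    rw [div_le_div_iff₀ hG hNB4]
    have hBle : b * s ≤ 2 * Minf * (q * t) := by
      rw [hb_def, hs_def]
      nlinarith [mul_le_mul_of_nonneg_left hsqle (mul_pos hM0 ht).le]
    have hs2 : s ^ 2 = q * t ^ 2 := by
      rw [hs_def, mul_pow, hsqq]
    nlinarith [sq_nonneg t, mul_nonneg (mul_nonneg hq0.le (sq_nonneg t)) (mul_nonneg hσ2 hpinf),
      mul_le_mul_of_nonneg_left hBle (by positivity : (0:ℝ) ≤ t ^ 2 / 2)]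
  calc -l * s + nn * (l ^ 2 * v) = -(s ^ 2 * (N + b * s)) / D ^ 2 := he1
    _ ≤ -(s ^ 2 / (4 * (N + b * s))) := he2
    _ ≤ -((1/8 * t ^ 2) / (σ2 * pinf + Minf * t)) := neg_le_neg he3
    _ = -(1/8 * t ^ 2) / (σ2 * pinf + Minf * t) := by rw [neg_div]

/-- **Pointwise concentration of a kernel density estimator.**
There is a numerical constant `c > 0` such that for independent random variables
`X₁, …, X_n` with densities `p₁, …, p_n`, a bounded square integrable kernel `K`,
bandwidth `h` with `n h ≥ 1`, and all `x ∈ ℝ`, `t > 0`,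
`P(|Z_n(x) - E Z_n(x)| ≥ (nh)^{-1/2} t) ≤ 2 exp(-c t² / (σ² p_∞ + M_∞ t))`. -/
theorem statement18 :
    ∃ c : ℝ, 0 < c ∧
      ∀ (n : ℕ) (Ω : Type) [MeasureSpace Ω],
        IsProbabilityMeasure (volume : Measure Ω) →
        ∀ (X : Fin n → Ω → ℝ) (p : Fin n → ℝ → ℝ),
          (∀ i, Measurable (X i)) →
          iIndepFun X volume →
          (∀ i, Measurable (p i)) → (∀ i x, 0 ≤ p i x) →
          (∀ i, Measure.map (X i) volume
              = (volume : Measure ℝ).withDensity fun x => ENNReal.ofReal (p i x)) →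
          ∀ K : ℝ → ℝ, Measurable K → MemLp K 2 (volume : Measure ℝ) →
          ∀ pinf Minf : ℝ, (∀ i x, p i x ≤ pinf) → (∀ x, |K x| ≤ Minf) →
          ∀ h : ℝ, 0 < h → 1 ≤ (n : ℝ) * h →
          ∀ x t : ℝ, 0 < t →
            (volume : Measure Ω)
                {ω : Ω | ((n : ℝ) * h) ^ (-(1 : ℝ) / 2) * t ≤
                  |(∑ i, K ((x - X i ω) / h)) / (n * h) -
                    ∫ ω', (∑ i, K ((x - X i ω') / h)) / (n * h)|}
              ≤ ENNReal.ofReal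
                  (2 * Real.exp (-(c * t ^ 2) / ((∫ z, K z ^ 2) * pinf + Minf * t))) := by
  refine ⟨1/8, by norm_num, ?_⟩
  intro n Ω _ hprob X p hXm hindep hpm hpnn hlaw K hKm hK2 pinf Minf hppinf hKMinf h hh hnh x t ht
  haveI := hprob
  have hnh0 : (0:ℝ) < (n:ℝ) * h := lt_of_lt_of_le one_pos hnh
  -- trivial case: K ≡ 0
  by_cases hM0 : Minf ≤ 0
  · have hK0 : ∀ z, K z = 0 := fun z => abs_nonpos_iff.1 (le_trans (hKMinf z) hM0)
    have hset : {ω : Ω | ((n : ℝ) * h) ^ (-(1 : ℝ) / 2) * t ≤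
        |(∑ i, K ((x - X i ω) / h)) / (n * h) -
          ∫ ω', (∑ i, K ((x - X i ω') / h)) / (n * h)|} = ∅ := by
      apply Set.eq_empty_iff_forall_notMem.2
      intro ω hω
      simp only [Set.mem_setOf_eq, hK0, Finset.sum_const_zero, zero_div, integral_zero,
        sub_zero, abs_zero] at hω
      have : 0 < ((n : ℝ) * h) ^ (-(1 : ℝ) / 2) * t :=
        mul_pos (Real.rpow_pos_of_pos hnh0 _) ht
      linarith
    rw [hset]
    simp
  push_neg at hM0
  have hn : 0 < n := by
    rcases Nat.eq_zero_or_pos n with h0 | h0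
    · subst h0; norm_num at hnh
    · exact h0
  set σ2 : ℝ := ∫ z, K z ^ 2 with hσ2_def
  have hσ2 : 0 ≤ σ2 := integral_nonneg fun z => sq_nonneg _
  have hpinf : 0 ≤ pinf := le_trans (hpnn ⟨0, hn⟩ 0) (hppinf ⟨0, hn⟩ 0)
  set Y : Fin n → Ω → ℝ := fun i ω => K ((x - X i ω) / h) with hY_def
  have hYm : ∀ i, Measurable (Y i) := fun i =>
    hKm.comp ((measurable_const.sub (hXm i)).div_const h)
  have hYb : ∀ i ω, |Y i ω| ≤ Minf := fun i ω => hKMinf _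
  have hYint : ∀ i, Integrable (Y i) (volume : Measure Ω) := fun i =>
    (integrable_const Minf).mono' (hYm i).aestronglyMeasurable
      (ae_of_all _ fun ω => by simpa using hYb i ω)
  set μi : Fin n → ℝ := fun i => ∫ ω, Y i ω with hμi_def
  have hμib : ∀ i, |μi i| ≤ Minf := fun i => by
    calc |∫ ω, Y i ω| ≤ ∫ ω, |Y i ω| := by
          simpa [Real.norm_eq_abs] using norm_integral_le_integral_norm (μ := (volume : Measure Ω)) (Y i)
      _ ≤ ∫ _ω : Ω, Minf := integral_mono ((hYint i).abs) (integrable_const _) (fun ω => hYb i ω)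
      _ = Minf := by simp
  set W : Fin n → Ω → ℝ := fun i ω => Y i ω - μi i with hW_def
  have hWm : ∀ i, Measurable (W i) := fun i => (hYm i).sub measurable_const
  have hWb : ∀ i ω, |W i ω| ≤ 2 * Minf := fun i ω => by
    calc |W i ω| ≤ |Y i ω| + |μi i| := by
          simpa [Real.norm_eq_abs, hW_def] using norm_sub_le (Y i ω) (μi i)
      _ ≤ 2 * Minf := by linarith [hYb i ω, hμib i]
  have hWint : ∀ i, Integrable (W i) (volume : Measure Ω) := fun i =>
    (hYint i).sub (integrable_const _)
  have hWmean : ∀ i, ∫ ω, W i ω = 0 := fun i => by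
    simp only [hW_def]
    rw [integral_sub (hYint i) (integrable_const _), integral_const]
    simp [hμi_def]
  set v : ℝ := pinf * (h * σ2) with hv_def
  have hv : 0 ≤ v := mul_nonneg hpinf (mul_nonneg hh.le hσ2)
  have hY2int : ∀ i, Integrable (fun ω => (Y i ω) ^ 2) (volume : Measure Ω) := fun i =>
    (integrable_const (Minf ^ 2)).mono' ((hYm i).pow_const 2).aestronglyMeasurable
      (ae_of_all _ fun ω => by
        have h1 := hYb i ω
        have h0 := abs_nonneg (Y i ω)
        simp only [norm_pow, Real.norm_eq_abs]
        nlinarith)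
  have hWvar : ∀ i, ∫ ω, (W i ω) ^ 2 ≤ v := by
    intro i
    have hsm : ∫ ω, (Y i ω) ^ 2 ≤ pinf * (h * σ2) :=
      my_second_moment (hXm i) (hpm i) (hpnn i) (hlaw i) hKm hK2 (fun y => hppinf i y) hh x
    have e : (fun ω => (W i ω) ^ 2)
        = fun ω => (Y i ω) ^ 2 - (2 * μi i) * Y i ω + (μi i) ^ 2 := by
      funext ω; simp only [hW_def]; ring
    have eint : ∫ ω, ((Y i ω) ^ 2 - (2 * μi i) * Y i ω + (μi i) ^ 2)
        = (∫ ω, (Y i ω) ^ 2) - (2 * μi i) * (μi i) + (μi i) ^ 2 := by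
      have e2 : ∫ ω, ((Y i ω) ^ 2 - (2 * μi i) * Y i ω + (μi i) ^ 2)
          = (∫ ω, ((Y i ω) ^ 2 - (2 * μi i) * Y i ω)) + ∫ _ω : Ω, (μi i) ^ 2 :=
        integral_add ((hY2int i).sub ((hYint i).const_mul _)) (integrable_const _)
      have e3 : ∫ ω, ((Y i ω) ^ 2 - (2 * μi i) * Y i ω)
          = (∫ ω, (Y i ω) ^ 2) - ∫ ω, (2 * μi i) * Y i ω :=
        integral_sub (hY2int i) ((hYint i).const_mul _)
      rw [e2, e3, integral_const_mul, integral_const]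
      simp [hμi_def]
    calc ∫ ω, (W i ω) ^ 2 = ∫ ω, ((Y i ω) ^ 2 - (2 * μi i) * Y i ω + (μi i) ^ 2) := by rw [e]
      _ = (∫ ω, (Y i ω) ^ 2) - (2 * μi i) * (μi i) + (μi i) ^ 2 := eint
      _ ≤ pinf * (h * σ2) - (μi i) ^ 2 := by nlinarith [sq_nonneg (μi i)]
      _ ≤ v := by rw [hv_def]; nlinarith [sq_nonneg (μi i)]
  -- independence of the centered variables
  have hindepW : iIndepFun W volume := by
    have hc := hindep.comp (fun i => fun y : ℝ => K ((x - y) / h) - μi i)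
      (fun i => (hKm.comp ((measurable_const.sub measurable_id).div_const h)).sub
        measurable_const)
    have hWeq : W = fun i => (fun y : ℝ => K ((x - y) / h) - μi i) ∘ X i := by
      funext i ω; simp [hW_def, hY_def, Function.comp]
    rw [hWeq]; exact hc
  have hindepW' : iIndepFun (fun i ω => -(W i ω)) volume := by
    have hc := hindep.comp (fun i => fun y : ℝ => -(K ((x - y) / h) - μi i))
      (fun i => ((hKm.comp ((measurable_const.sub measurable_id).div_const h)).sub
        measurable_const).neg)
    have hWeq : (fun i ω => -(W i ω)) = fun i => (fun y : ℝ => -(K ((x - y) / h) - μi i)) ∘ X i := by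
      funext i ω; simp [hW_def, hY_def, Function.comp]
    rw [hWeq]; exact hc
  -- parameters
  set q : ℝ := (n : ℝ) * h with hq_def
  set sq : ℝ := Real.sqrt q with hsq_def
  have hsqq : sq ^ 2 = q := Real.sq_sqrt hnh0.le
  have hsqpos : 0 < sq := Real.sqrt_pos.2 hnh0
  have hsqle : sq ≤ q := by nlinarith [sq_nonneg (sq - 1), hnh]
  set s : ℝ := sq * t with hs_def
  have hs : 0 < s := mul_pos hsqpos ht
  set b : ℝ := 2 * Minf with hb_def
  have hb : 0 < b := by rw [hb_def]; linarith
  set N : ℝ := (n : ℝ) * v with hN_def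
  have hN : 0 ≤ N := mul_nonneg (Nat.cast_nonneg n) hv
  set D : ℝ := 2 * N + b * s with hD_def
  have hD : 0 < D := by positivity
  set l : ℝ := s / D with hl_def
  have hl : 0 ≤ l := le_of_lt (div_pos hs hD)
  have hlb : l * b ≤ 1 := by
    rw [hl_def, div_mul_eq_mul_div, div_le_one hD, hD_def]
    nlinarith
  have hrpow : q ^ (-(1 : ℝ) / 2) = sq⁻¹ := by
    rw [show (-(1:ℝ) / 2) = -(1/2 : ℝ) by norm_num, Real.rpow_neg hnh0.le,
      ← Real.sqrt_eq_rpow]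
  clear_value σ2 v q sq s b N D l
  -- mgf bounds
  have hmgfW : ∀ i, mgf (W i) volume l ≤ Real.exp (l ^ 2 * v) := fun i =>
    my_mgf_le (hWm i) hv (hWb i) (hWmean i) (hWvar i) hl hlb
  have hmgfW' : ∀ i, mgf (fun ω => -(W i ω)) volume l ≤ Real.exp (l ^ 2 * v) := fun i =>
    my_mgf_le (W := fun ω => -(W i ω)) (hWm i).neg hv (fun ω => by rw [abs_neg]; exact hWb i ω)
      (by rw [integral_neg, hWmean i, neg_zero])
      (by simp only [neg_sq]; exact hWvar i)
      hl hlb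
  -- Chernoff bound for a sum of independent variables
  have chernoff : ∀ (Z : Fin n → Ω → ℝ), (∀ i, Measurable (Z i)) →
      iIndepFun Z volume →
      (∀ i ω, |Z i ω| ≤ b) →
      (∀ i, mgf (Z i) volume l ≤ Real.exp (l ^ 2 * v)) →
      volume {ω : Ω | s ≤ ∑ i, Z i ω}
        ≤ ENNReal.ofReal (Real.exp (-l * s + (n : ℝ) * (l ^ 2 * v))) := by
    intro Z hZm hZindep hZb hZmgf
    have hSm : Measurable (fun ω => ∑ i, Z i ω) := by
      apply Finset.measurable_sum
      exact fun i _ => hZm i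
    have hSb : ∀ ω, |∑ i, Z i ω| ≤ (n : ℝ) * (b) := fun ω => by
      calc |∑ i, Z i ω| ≤ ∑ i, |Z i ω| := Finset.abs_sum_le_sum_abs _ _
        _ ≤ ∑ _i : Fin n, b := Finset.sum_le_sum fun i _ => hZb i ω
        _ = (n : ℝ) * (b) := by
            rw [Finset.sum_const, Finset.card_univ, Fintype.card_fin, nsmul_eq_mul]
    have hint : Integrable (fun ω => Real.exp (l * (∑ i, Z i ω))) (volume : Measure Ω) := by
      refine (integrable_const (Real.exp (l * ((n : ℝ) * (b))))).mono'
        ((hSm.const_mul l).exp).aestronglyMeasurable (ae_of_all _ fun ω => ?_)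
      rw [Real.norm_eq_abs, abs_of_pos (Real.exp_pos _)]
      exact Real.exp_le_exp.2 (mul_le_mul_of_nonneg_left
        (le_trans (le_abs_self _) (hSb ω)) hl)
    have hcher := measure_ge_le_exp_mul_mgf (μ := (volume : Measure Ω))
      (X := fun ω => ∑ i, Z i ω) s hl hint
    have hmgf_eq : mgf (fun ω => ∑ i, Z i ω) volume l = ∏ i, mgf (Z i) volume l := by
      have hsum : (fun ω => ∑ i, Z i ω) = ∑ i, Z i := by
        funext ω; simp [Finset.sum_apply]
      rw [hsum]
      exact hZindep.mgf_sum hZm Finset.univ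
    have hmgf_le : mgf (fun ω => ∑ i, Z i ω) volume l ≤ Real.exp ((n : ℝ) * (l ^ 2 * v)) := by
      rw [hmgf_eq]
      calc ∏ i, mgf (Z i) volume l ≤ ∏ _i : Fin n, Real.exp (l ^ 2 * v) :=
            Finset.prod_le_prod (fun i _ => mgf_nonneg) (fun i _ => hZmgf i)
        _ = Real.exp ((n : ℝ) * (l ^ 2 * v)) := by
            rw [Finset.prod_const, Finset.card_univ, Fintype.card_fin, ← Real.exp_nat_mul]
    rw [ENNReal.le_ofReal_iff_toReal_le (measure_ne_top _ _) (Real.exp_nonneg _)]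
    calc (volume {ω : Ω | s ≤ ∑ i, Z i ω}).toReal
        ≤ Real.exp (-l * s) * mgf (fun ω => ∑ i, Z i ω) volume l := hcher
      _ ≤ Real.exp (-l * s) * Real.exp ((n : ℝ) * (l ^ 2 * v)) :=
          mul_le_mul_of_nonneg_left hmgf_le (Real.exp_nonneg _)
      _ = Real.exp (-l * s + (n : ℝ) * (l ^ 2 * v)) := (Real.exp_add _ _).symm
  -- the event is contained in the union of the two tail events
  have hmean_all : (∫ ω', (∑ i, K ((x - X i ω') / h)) / q)
      = (∑ i, μi i) / q := by
    rw [integral_div]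
    congr 1
    rw [hμi_def]
    exact integral_finset_sum Finset.univ (fun i _ => hYint i)
  have hsub : {ω : Ω | q ^ (-(1 : ℝ) / 2) * t ≤
        |(∑ i, K ((x - X i ω) / h)) / q -
          ∫ ω', (∑ i, K ((x - X i ω') / h)) / q|}
      ⊆ {ω : Ω | s ≤ ∑ i, W i ω} ∪ {ω : Ω | s ≤ ∑ i, -(W i ω)} := by
    intro ω hω
    simp only [Set.mem_setOf_eq] at hω
    rw [hmean_all] at hω
    rw [hrpow] at hω
    have hWS : ∀ ω' : Ω, ∑ i, W i ω' = (∑ i, K ((x - X i ω') / h)) - ∑ i, μi i := by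
      intro ω'
      simp only [hW_def, hY_def]
      rw [Finset.sum_sub_distrib]
    have habs : s ≤ |∑ i, W i ω| := by
      rw [hWS ω]
      have hdiv : |(∑ i, K ((x - X i ω) / h)) / q - (∑ i, μi i) / q|
          = |(∑ i, K ((x - X i ω) / h)) - ∑ i, μi i| / q := by
        rw [div_sub_div_same, abs_div, abs_of_pos hnh0]
      rw [hdiv] at hω
      have h1 : (sq⁻¹ * t) * q ≤ |(∑ i, K ((x - X i ω) / h)) - ∑ i, μi i| :=
        (le_div_iff₀ hnh0).1 hω
      have h2 : (sq⁻¹ * t) * q = s := by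
        rw [hs_def, ← hsqq]
        field_simp
      linarith [h2 ▸ h1]
    rcases le_abs.1 habs with hc | hc
    · left; exact hc
    · right
      simp only [Set.mem_setOf_eq, Finset.sum_neg_distrib]
      linarith [hc]
  -- putting everything together
  have hG : 0 < σ2 * pinf + Minf * t := by
    have h1 : 0 ≤ σ2 * pinf := mul_nonneg hσ2 hpinf
    have h2 : 0 < Minf * t := mul_pos hM0 ht
    linarith
  have hNval : N = q * (σ2 * pinf) := by rw [hN_def, hv_def, hq_def]; ring
  have hvN : (n:ℝ) * v = N := hN_def.symm
  have hexp_le : -l * s + (n : ℝ) * (l ^ 2 * v) ≤ -(1/8 * t ^ 2) / (σ2 * pinf + Minf * t) :=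
    my_arith hσ2 hpinf hM0 ht hnh hsqq hsqpos hs_def hb_def hNval hN hvN hD_def hl_def
  refine le_trans (measure_mono hsub) ?_
  refine le_trans (measure_union_le _ _) ?_
  refine le_trans (add_le_add (chernoff W hWm hindepW hWb hmgfW)
    (chernoff (fun i ω => -(W i ω)) (fun i => (hWm i).neg) hindepW'
      (fun i ω => by rw [abs_neg]; exact hWb i ω) hmgfW')) ?_
  rw [← ENNReal.ofReal_add (Real.exp_nonneg _) (Real.exp_nonneg _)]
  apply ENNReal.ofReal_le_ofReal
  have hfin := Real.exp_le_exp.2 hexp_le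
  linarith

end
end
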